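/- Let u, Γ : [0,∞) → ℝ be functions with u differentiable satisfying u'(t) = α(t)(Γ(t) - u(t)), where α is continuous, positive, non-increasing with divergent integral. If Γ(t) converges to a limit L as t → ∞ and u is bounded, then u(t) → L as t → ∞. -/

import Mathlib

open Filter Set

/-- Integrating factor lemma: if `u' = α (Γ - u)` and `Γ ≤ c` on `[T, ∞)`, then
`t ↦ exp (A t) * (u t - c)` is antitone on `[T, ∞)`, where `A' = α`. -/
lemma aux_antitone (u Γ α A : ℝ → ℝ) (c T : ℝ) (hT : 0 ≤ T)
    (hα_pos : ∀ t, 0 ≤ t → 0 < α t)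
    (hA : ∀ t : ℝ, 0 ≤ t → HasDerivAt A (α t) t)
    (hu : ∀ t, 0 ≤ t → HasDerivAt u (α t * (Γ t - u t)) t)
    (hΓc : ∀ t, T ≤ t → Γ t ≤ c) :
    AntitoneOn (fun t => Real.exp (A t) * (u t - c)) (Set.Ici T) := by
  have hderiv : ∀ t, 0 ≤ t → HasDerivAt (fun t => Real.exp (A t) * (u t - c))
      (Real.exp (A t) * (α t * (Γ t - c))) t := by
    intro t ht
    have h1 : HasDerivAt (fun t => Real.exp (A t)) (Real.exp (A t) * α t) t :=
      (Real.hasDerivAt_exp (A t)).comp t (hA t ht)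
    have h2 : HasDerivAt (fun t => u t - c) (α t * (Γ t - u t)) t :=
      (hu t ht).sub_const c
    have h3 := h1.mul h2
    exact h3.congr_deriv (by ring)
  apply antitoneOn_of_deriv_nonpos (convex_Ici T)
  · intro x hx
    exact (hderiv x (le_trans hT hx)).differentiableAt.continuousAt.continuousWithinAt
  · intro x hx
    rw [interior_Ici] at hx
    exact (hderiv x (le_trans hT hx.le)).differentiableAt.differentiableWithinAt
  · intro x hx
    rw [interior_Ici] at hx
    have hx0 : (0:ℝ) ≤ x := le_trans hT hx.le
    rw [(hderiv x hx0).deriv]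
    exact mul_nonpos_of_nonneg_of_nonpos (Real.exp_pos _).le
      (mul_nonpos_of_nonneg_of_nonpos (hα_pos x hx0).le
        (sub_nonpos.mpr (hΓc x hx.le)))

theorem tracking_limit (u Γ α : ℝ → ℝ) (L : ℝ)
    (hα_cont : Continuous α) (hα_pos : ∀ t, 0 ≤ t → 0 < α t)
    (hα_mono : AntitoneOn α (Set.Ici 0))
    (hα_div : Filter.Tendsto (fun t => ∫ s in (0:ℝ)..t, α s) Filter.atTop Filter.atTop)
    (hu_deriv : ∀ t, 0 ≤ t → HasDerivAt u (α t * (Γ t - u t)) t)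
    (hu_bdd : ∃ M : ℝ, ∀ t, 0 ≤ t → |u t| ≤ M)
    (hΓ : Filter.Tendsto Γ Filter.atTop (nhds L)) :
    Filter.Tendsto u Filter.atTop (nhds L) := by
  set A : ℝ → ℝ := fun t => ∫ s in (0:ℝ)..t, α s with hA_def
  have hA : ∀ t : ℝ, 0 ≤ t → HasDerivAt A (α t) t := by
    intro t _
    exact intervalIntegral.integral_hasDerivAt_right
      (hα_cont.intervalIntegrable 0 t)
      (hα_cont.aestronglyMeasurable.stronglyMeasurableAtFilter)
      hα_cont.continuousAt
  -- exp (A t) → ∞, so (exp (A t))⁻¹ → 0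
  have hexpA : Tendsto (fun t => Real.exp (A t)) atTop atTop :=
    Real.tendsto_exp_atTop.comp hα_div
  have hinv : Tendsto (fun t => (Real.exp (A t))⁻¹) atTop (nhds 0) :=
    hexpA.inv_tendsto_atTop
  rw [Metric.tendsto_nhds]
  intro ε hε
  have hε2 : 0 < ε / 2 := by linarith
  -- choose T ≥ 0 with |Γ t - L| < ε/2 for all t ≥ T
  have hΓev : ∀ᶠ t in atTop, |Γ t - L| < ε / 2 := by
    have := Metric.tendsto_nhds.mp hΓ (ε / 2) hε2
    simpa [Real.dist_eq] using this
  obtain ⟨T, hTprop⟩ := eventually_atTop.mp ((eventually_ge_atTop (0:ℝ)).and hΓev)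
  have hT0 : 0 ≤ T := (hTprop T le_rfl).1
  -- upper bound: Γ ≤ L + ε/2 on [T, ∞)
  have hupper : AntitoneOn (fun t => Real.exp (A t) * (u t - (L + ε / 2))) (Set.Ici T) := by
    refine aux_antitone u Γ α A (L + ε / 2) T hT0 hα_pos hA hu_deriv ?_
    intro t ht
    have := (hTprop t ht).2
    have := abs_lt.mp this
    linarith [this.2]
  -- lower bound via negation: -Γ ≤ -(L - ε/2) on [T, ∞)
  have hlower : AntitoneOn
      (fun t => Real.exp (A t) * (-u t - (-(L - ε / 2)))) (Set.Ici T) := by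
    refine aux_antitone (fun t => -u t) (fun t => -Γ t) α A (-(L - ε / 2)) T hT0
      hα_pos hA ?_ ?_
    · intro t ht
      have h := (hu_deriv t ht).neg
      exact h.congr_deriv (by ring)
    · intro t ht
      have := abs_lt.mp (hTprop t ht).2
      simp only [neg_le_neg_iff]
      linarith [this.1]
  set C₁ : ℝ := Real.exp (A T) * (u T - (L + ε / 2)) with hC₁
  set C₂ : ℝ := Real.exp (A T) * (-u T - (-(L - ε / 2))) with hC₂
  have ev1 : ∀ᶠ t in atTop, |C₁| * (Real.exp (A t))⁻¹ < ε / 2 :=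
    (hinv.const_mul |C₁|).eventually (by simpa using gt_mem_nhds (by linarith : (0:ℝ) < ε/2))
  have ev2 : ∀ᶠ t in atTop, |C₂| * (Real.exp (A t))⁻¹ < ε / 2 :=
    (hinv.const_mul |C₂|).eventually (by simpa using gt_mem_nhds (by linarith : (0:ℝ) < ε/2))
  filter_upwards [eventually_ge_atTop T, ev1, ev2] with t ht h1 h2
  have hEpos : 0 < Real.exp (A t) := Real.exp_pos _
  have hu1 : Real.exp (A t) * (u t - (L + ε / 2)) ≤ C₁ :=
    hupper (mem_Ici.mpr le_rfl) (mem_Ici.mpr ht) ht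
  have hu2 : Real.exp (A t) * (-u t - (-(L - ε / 2))) ≤ C₂ :=
    hlower (mem_Ici.mpr le_rfl) (mem_Ici.mpr ht) ht
  have hb1 : u t - (L + ε / 2) ≤ C₁ * (Real.exp (A t))⁻¹ := by
    calc u t - (L + ε / 2)
        = (Real.exp (A t))⁻¹ * (Real.exp (A t) * (u t - (L + ε / 2))) := by
          field_simp
      _ ≤ C₁ * (Real.exp (A t))⁻¹ := by
          rw [mul_comm]
          exact mul_le_mul_of_nonneg_right hu1 (by positivity)
  have hb2 : -u t - (-(L - ε / 2)) ≤ C₂ * (Real.exp (A t))⁻¹ := by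
    calc -u t - (-(L - ε / 2))
        = (Real.exp (A t))⁻¹ * (Real.exp (A t) * (-u t - (-(L - ε / 2)))) := by
          field_simp
      _ ≤ C₂ * (Real.exp (A t))⁻¹ := by
          rw [mul_comm]
          exact mul_le_mul_of_nonneg_right hu2 (by positivity)
  have hc1 : C₁ * (Real.exp (A t))⁻¹ < ε / 2 :=
    lt_of_le_of_lt (mul_le_mul_of_nonneg_right (le_abs_self _) (by positivity)) h1
  have hc2 : C₂ * (Real.exp (A t))⁻¹ < ε / 2 :=
    lt_of_le_of_lt (mul_le_mul_of_nonneg_right (le_abs_self _) (by positivity)) h2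
  rw [Real.dist_eq, abs_lt]
  constructor <;> linarith
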